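/- For any finite abstract simplicial complex G, ∑_{x∈G} ω(x)·χ(S(x)) = 0, where S(x) is the unit sphere of x. -/

import Mathlib

open Finset BigOperators

variable {α : Type*} [DecidableEq α]

/-- A finite abstract simplicial complex: a finite collection of nonempty finite
sets closed under taking nonempty subsets. -/
def IsComplex (G : Finset (Finset α)) : Prop :=
  (∀ x ∈ G, x.Nonempty) ∧ ∀ x ∈ G, ∀ y : Finset α, y.Nonempty → y ⊆ x → y ∈ G

/-- ω(x) = (-1)^(|x|-1). -/
def omegaS (x : Finset α) : ℤ := (-1) ^ (x.card - 1)

/-- The nonempty chains (subsets totally ordered by inclusion) of a finite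
collection of finite sets. -/
def chainsOf (S : Finset (Finset α)) : Finset (Finset (Finset α)) :=
  S.powerset.filter (fun C => C.Nonempty ∧ ∀ a ∈ C, ∀ b ∈ C, a ⊆ b ∨ b ⊆ a)

/-- Euler characteristic of the simplicial complex whose simplices are the
nonempty chains in S: ∑_C (-1)^(|C|-1). -/
def chiChains (S : Finset (Finset α)) : ℤ :=
  ∑ C ∈ chainsOf S, (-1) ^ (C.card - 1)

/-- The unit sphere of x in G: all simplices strictly contained in x or
strictly containing x. -/
def sphere (G : Finset (Finset α)) (x : Finset α) : Finset (Finset α) :=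
  G.filter (fun y => y ⊂ x ∨ x ⊂ y)

/-- Chains including the empty chain. -/
def chains0 (S : Finset (Finset α)) : Finset (Finset (Finset α)) :=
  S.powerset.filter (fun C => ∀ a ∈ C, ∀ b ∈ C, a ⊆ b ∨ b ⊆ a)

def E (S : Finset (Finset α)) : ℤ := ∑ C ∈ chains0 S, (-1) ^ C.card

lemma mem_chains0 {S C : Finset (Finset α)} :
    C ∈ chains0 S ↔ C ⊆ S ∧ ∀ a ∈ C, ∀ b ∈ C, a ⊆ b ∨ b ⊆ a := by
  simp [chains0, mem_filter, mem_powerset]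

lemma mem_chainsOf {S C : Finset (Finset α)} :
    C ∈ chainsOf S ↔ C ⊆ S ∧ C.Nonempty ∧ ∀ a ∈ C, ∀ b ∈ C, a ⊆ b ∨ b ⊆ a := by
  simp only [chainsOf, mem_filter, mem_powerset]

lemma neg_one_pow_sub_one {n : ℕ} (h : 1 ≤ n) : ((-1 : ℤ)) ^ (n - 1) = -(-1) ^ n := by
  obtain ⟨m, rfl⟩ := Nat.exists_eq_add_of_le h
  have hm : 1 + m - 1 = m := by omega
  rw [hm, pow_add]
  ring

lemma chain_max {C : Finset (Finset α)} (hne : C.Nonempty)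
    (hch : ∀ a ∈ C, ∀ b ∈ C, a ⊆ b ∨ b ⊆ a) :
    C.sup id ∈ C ∧ ∀ y ∈ C, y ⊆ C.sup id := by
  obtain ⟨m, hm, hmax⟩ := Finset.exists_max_image C Finset.card hne
  have hsub : ∀ y ∈ C, y ⊆ m := by
    intro y hy
    rcases hch y hy m hm with h | h
    · exact h
    · exact (Finset.eq_of_subset_of_card_le h (hmax y hy)).ge
  have : C.sup id = m := by
    apply le_antisymm
    · exact Finset.sup_le fun y hy => hsub y hy
    · exact Finset.le_sup (f := id) hm
  rw [this]
  exact ⟨hm, hsub⟩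

lemma chain_min {C : Finset (Finset α)} (hne : C.Nonempty)
    (hch : ∀ a ∈ C, ∀ b ∈ C, a ⊆ b ∨ b ⊆ a) :
    C.inf' hne id ∈ C ∧ ∀ y ∈ C, C.inf' hne id ⊆ y := by
  obtain ⟨m, hm, hmin⟩ := Finset.exists_min_image C Finset.card hne
  have hsub : ∀ y ∈ C, m ⊆ y := by
    intro y hy
    rcases hch y hy m hm with h | h
    · exact (Finset.eq_of_subset_of_card_le h (hmin y hy)).ge
    · exact h
  have : C.inf' hne id = m := by
    apply le_antisymm
    · exact Finset.inf'_le _ hm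
    · exact Finset.le_inf' _ _ fun y hy => hsub y hy
  rw [this]
  exact ⟨hm, hsub⟩

lemma E_eq (S : Finset (Finset α)) : E S = 1 - chiChains S := by
  have hins : chains0 S = insert ∅ (chainsOf S) := by
    ext C
    simp only [mem_chains0, mem_chainsOf, Finset.mem_insert]
    constructor
    · rintro ⟨h1, h2⟩
      rcases C.eq_empty_or_nonempty with rfl | hne
      · exact Or.inl rfl
      · exact Or.inr ⟨h1, hne, h2⟩
    · rintro (rfl | ⟨h1, _, h2⟩)
      · simp
      · exact ⟨h1, h2⟩
  have hnotin : (∅ : Finset (Finset α)) ∉ chainsOf S := by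
    simp [mem_chainsOf]
  rw [E, hins, Finset.sum_insert hnotin]
  have hstep : ∑ C ∈ chainsOf S, ((-1 : ℤ)) ^ C.card = -chiChains S := by
    rw [chiChains, ← Finset.sum_neg_distrib]
    apply Finset.sum_congr rfl
    intro C hC
    have hne : C.Nonempty := (mem_chainsOf.mp hC).2.1
    have h1 : 1 ≤ C.card := Finset.card_pos.mpr hne
    rw [neg_one_pow_sub_one h1]
    ring
  rw [hstep]
  simp only [Finset.card_empty, pow_zero]
  ring

lemma groupMax (S : Finset (Finset α)) :
    chiChains S = ∑ m ∈ S, E (S.filter (· ⊂ m)) := by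
  rw [chiChains]
  have hsig : ∑ m ∈ S, E (S.filter (· ⊂ m)) =
      ∑ p ∈ S.sigma (fun m => chains0 (S.filter (· ⊂ m))), ((-1 : ℤ)) ^ p.2.card := by
    rw [Finset.sum_sigma]
    rfl
  rw [hsig]
  apply Finset.sum_bij'
    (i := fun C _ => (⟨C.sup id, C.erase (C.sup id)⟩ : Σ _ : Finset α, Finset (Finset α)))
    (j := fun p _ => insert p.1 p.2)
  case hi =>
    intro C hC
    obtain ⟨hsub, hne, hch⟩ := mem_chainsOf.mp hC
    obtain ⟨hmem, hmax⟩ := chain_max hne hch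
    rw [Finset.mem_sigma]
    refine ⟨hsub hmem, ?_⟩
    rw [mem_chains0]
    constructor
    · intro y hy
      have hyC := Finset.mem_of_mem_erase hy
      have hyne := Finset.ne_of_mem_erase hy
      rw [Finset.mem_filter]
      exact ⟨hsub hyC, ssubset_of_subset_of_ne (hmax y hyC) hyne⟩
    · intro a ha b hb
      exact hch a (Finset.mem_of_mem_erase ha) b (Finset.mem_of_mem_erase hb)
  case hj =>
    rintro ⟨m, C⟩ hp
    rw [Finset.mem_sigma] at hp
    obtain ⟨hm, hC⟩ := hp
    obtain ⟨hsub, hch⟩ := mem_chains0.mp hC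
    rw [mem_chainsOf]
    refine ⟨?_, ⟨m, Finset.mem_insert_self _ _⟩, ?_⟩
    · intro y hy
      rcases Finset.mem_insert.mp hy with rfl | hy
      · exact hm
      · exact (Finset.mem_filter.mp (hsub hy)).1
    · intro a ha b hb
      have key : ∀ y ∈ C, y ⊆ m := fun y hy => ((Finset.mem_filter.mp (hsub hy)).2).subset
      rcases Finset.mem_insert.mp ha with rfl | ha <;> rcases Finset.mem_insert.mp hb with rfl | hb
      · left; rfl
      · right; exact key b hb
      · left; exact key a ha
      · exact hch a ha b hb
  case left_neg =>
    intro C hC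
    obtain ⟨hsub, hne, hch⟩ := mem_chainsOf.mp hC
    obtain ⟨hmem, _⟩ := chain_max hne hch
    simp [Finset.insert_erase hmem]
  case right_neg =>
    rintro ⟨m, C⟩ hp
    rw [Finset.mem_sigma] at hp
    obtain ⟨hm, hC⟩ := hp
    obtain ⟨hsub, hch⟩ := mem_chains0.mp hC
    have key : ∀ y ∈ C, y ⊂ m := fun y hy => (Finset.mem_filter.mp (hsub hy)).2
    have hnotin : m ∉ C := fun h => (key m h).ne rfl
    have hsup : (insert m C).sup id = m := by
      apply le_antisymm
      · apply Finset.sup_le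
        intro y hy
        rcases Finset.mem_insert.mp hy with rfl | hy
        · exact le_rfl
        · exact (key y hy).subset
      · exact Finset.le_sup (f := id) (Finset.mem_insert_self _ _)
    simp only [hsup, Finset.erase_insert hnotin]
  case h =>
    intro C hC
    obtain ⟨hsub, hne, hch⟩ := mem_chainsOf.mp hC
    obtain ⟨hmem, _⟩ := chain_max hne hch
    simp only [Finset.card_erase_of_mem hmem]

lemma groupMin (S : Finset (Finset α)) :
    chiChains S = ∑ m ∈ S, E (S.filter (m ⊂ ·)) := by
  rw [chiChains]
  have hsig : ∑ m ∈ S, E (S.filter (m ⊂ ·)) =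
      ∑ p ∈ S.sigma (fun m => chains0 (S.filter (m ⊂ ·))), ((-1 : ℤ)) ^ p.2.card := by
    rw [Finset.sum_sigma]
    rfl
  rw [hsig]
  apply Finset.sum_bij'
    (i := fun C hC =>
      (⟨C.inf' ((mem_chainsOf.mp hC).2.1) id, C.erase (C.inf' ((mem_chainsOf.mp hC).2.1) id)⟩ :
        Σ _ : Finset α, Finset (Finset α)))
    (j := fun p _ => insert p.1 p.2)
  case hi =>
    intro C hC
    obtain ⟨hsub, hne, hch⟩ := mem_chainsOf.mp hC
    obtain ⟨hmem, hmin⟩ := chain_min hne hch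
    rw [Finset.mem_sigma]
    refine ⟨hsub hmem, ?_⟩
    rw [mem_chains0]
    constructor
    · intro y hy
      have hyC := Finset.mem_of_mem_erase hy
      have hyne := Finset.ne_of_mem_erase hy
      rw [Finset.mem_filter]
      exact ⟨hsub hyC, ssubset_of_subset_of_ne (hmin y hyC) hyne.symm⟩
    · intro a ha b hb
      exact hch a (Finset.mem_of_mem_erase ha) b (Finset.mem_of_mem_erase hb)
  case hj =>
    rintro ⟨m, C⟩ hp
    rw [Finset.mem_sigma] at hp
    obtain ⟨hm, hC⟩ := hp
    obtain ⟨hsub, hch⟩ := mem_chains0.mp hC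
    rw [mem_chainsOf]
    refine ⟨?_, ⟨m, Finset.mem_insert_self _ _⟩, ?_⟩
    · intro y hy
      rcases Finset.mem_insert.mp hy with rfl | hy
      · exact hm
      · exact (Finset.mem_filter.mp (hsub hy)).1
    · intro a ha b hb
      have key : ∀ y ∈ C, m ⊆ y := fun y hy => ((Finset.mem_filter.mp (hsub hy)).2).subset
      rcases Finset.mem_insert.mp ha with rfl | ha <;> rcases Finset.mem_insert.mp hb with rfl | hb
      · left; rfl
      · left; exact key b hb
      · right; exact key a ha
      · exact hch a ha b hb
  case left_neg =>
    intro C hC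
    obtain ⟨hsub, hne, hch⟩ := mem_chainsOf.mp hC
    obtain ⟨hmem, _⟩ := chain_min hne hch
    exact Finset.insert_erase hmem
  case right_neg =>
    rintro ⟨m, C⟩ hp
    rw [Finset.mem_sigma] at hp
    obtain ⟨hm, hC⟩ := hp
    obtain ⟨hsub, hch⟩ := mem_chains0.mp hC
    have key : ∀ y ∈ C, m ⊂ y := fun y hy => (Finset.mem_filter.mp (hsub hy)).2
    have hnotin : m ∉ C := fun h => (key m h).ne rfl
    have hinf : ∀ h : (insert m C).Nonempty, (insert m C).inf' h id = m := by
      intro h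
      apply le_antisymm
      · exact Finset.inf'_le _ (Finset.mem_insert_self _ _)
      · apply Finset.le_inf'
        intro y hy
        rcases Finset.mem_insert.mp hy with rfl | hy
        · exact le_rfl
        · exact (key y hy).subset
    simp only [hinf, Finset.erase_insert hnotin]
  case h =>
    intro C hC
    obtain ⟨hsub, hne, hch⟩ := mem_chainsOf.mp hC
    obtain ⟨hmem, _⟩ := chain_min hne hch
    simp only [Finset.card_erase_of_mem hmem]

lemma E_sphere (G : Finset (Finset α)) (x : Finset α) :
    E (sphere G x) = E (G.filter (· ⊂ x)) * E (G.filter (x ⊂ ·)) := by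
  rw [E, E, E, Finset.sum_mul_sum, ← Finset.sum_product']
  apply Finset.sum_bij' (i := fun C _ => (C.filter (· ⊂ x), C.filter (x ⊂ ·)))
    (j := fun p _ => p.1 ∪ p.2)
  case hi =>
    intro C hC
    obtain ⟨hsub, hch⟩ := mem_chains0.mp hC
    rw [Finset.mem_product]
    constructor
    · rw [mem_chains0]
      refine ⟨?_, ?_⟩
      · intro y hy
        rw [Finset.mem_filter] at hy ⊢
        exact ⟨(Finset.mem_filter.mp (hsub hy.1)).1, hy.2⟩
      · intro a ha b hb
        exact hch a (Finset.mem_of_mem_filter a ha) b (Finset.mem_of_mem_filter b hb)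
    · rw [mem_chains0]
      refine ⟨?_, ?_⟩
      · intro y hy
        rw [Finset.mem_filter] at hy ⊢
        exact ⟨(Finset.mem_filter.mp (hsub hy.1)).1, hy.2⟩
      · intro a ha b hb
        exact hch a (Finset.mem_of_mem_filter a ha) b (Finset.mem_of_mem_filter b hb)
  case hj =>
    rintro ⟨C1, C2⟩ hp
    rw [Finset.mem_product] at hp
    obtain ⟨h1, h2⟩ := hp
    obtain ⟨hs1, hc1⟩ := mem_chains0.mp h1
    obtain ⟨hs2, hc2⟩ := mem_chains0.mp h2
    rw [mem_chains0]
    constructor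
    · intro y hy
      rw [sphere, Finset.mem_filter]
      rcases Finset.mem_union.mp hy with hy | hy
      · have := Finset.mem_filter.mp (hs1 hy)
        exact ⟨this.1, Or.inl this.2⟩
      · have := Finset.mem_filter.mp (hs2 hy)
        exact ⟨this.1, Or.inr this.2⟩
    · intro a ha b hb
      have key1 : ∀ y ∈ C1, y ⊂ x := fun y hy => (Finset.mem_filter.mp (hs1 hy)).2
      have key2 : ∀ y ∈ C2, x ⊂ y := fun y hy => (Finset.mem_filter.mp (hs2 hy)).2
      rcases Finset.mem_union.mp ha with ha | ha <;> rcases Finset.mem_union.mp hb with hb | hb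
      · exact hc1 a ha b hb
      · left; exact ((key1 a ha).trans (key2 b hb)).subset
      · right; exact ((key1 b hb).trans (key2 a ha)).subset
      · exact hc2 a ha b hb
  case left_neg =>
    intro C hC
    obtain ⟨hsub, _⟩ := mem_chains0.mp hC
    have : C.filter (· ⊂ x) ∪ C.filter (x ⊂ ·) = C := by
      ext y
      simp only [Finset.mem_union, Finset.mem_filter]
      constructor
      · rintro (⟨h, _⟩ | ⟨h, _⟩) <;> exact h
      · intro hy
        have hor := (Finset.mem_filter.mp (hsub hy)).2
        rcases hor with h | h
        · exact Or.inl ⟨hy, h⟩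
        · exact Or.inr ⟨hy, h⟩
    exact this
  case right_neg =>
    rintro ⟨C1, C2⟩ hp
    rw [Finset.mem_product] at hp
    obtain ⟨h1, h2⟩ := hp
    obtain ⟨hs1, _⟩ := mem_chains0.mp h1
    obtain ⟨hs2, _⟩ := mem_chains0.mp h2
    have key1 : ∀ y ∈ C1, y ⊂ x := fun y hy => (Finset.mem_filter.mp (hs1 hy)).2
    have key2 : ∀ y ∈ C2, x ⊂ y := fun y hy => (Finset.mem_filter.mp (hs2 hy)).2
    have e1 : (C1 ∪ C2).filter (· ⊂ x) = C1 := by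
      ext y
      simp only [Finset.mem_filter, Finset.mem_union]
      constructor
      · rintro ⟨hy | hy, h⟩
        · exact hy
        · exact absurd h (by have := key2 y hy; intro hc; exact (this.trans hc).ne rfl)
      · intro hy; exact ⟨Or.inl hy, key1 y hy⟩
    have e2 : (C1 ∪ C2).filter (x ⊂ ·) = C2 := by
      ext y
      simp only [Finset.mem_filter, Finset.mem_union]
      constructor
      · rintro ⟨hy | hy, h⟩
        · exact absurd h (by have := key1 y hy; intro hc; exact (hc.trans this).ne rfl)
        · exact hy
      · intro hy; exact ⟨Or.inr hy, key2 y hy⟩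
    dsimp only
    rw [e1, e2]
  case h =>
    intro C hC
    obtain ⟨hsub, _⟩ := mem_chains0.mp hC
    have hcong : C.filter (x ⊂ ·) = C.filter (fun y => ¬ y ⊂ x) := by
      apply Finset.filter_congr
      intro y hy
      have hor := (Finset.mem_filter.mp (hsub hy)).2
      constructor
      · intro h hc; exact (hc.trans h).ne rfl
      · intro h
        rcases hor with h' | h'
        · exact absurd h' h
        · exact h'
    have hcard : (C.filter (· ⊂ x)).card + (C.filter (x ⊂ ·)).card = C.card := by
      rw [hcong]
      exact Finset.card_filter_add_card_filter_not _
    show ((-1 : ℤ)) ^ C.card = (-1) ^ (C.filter (· ⊂ x)).card * (-1) ^ (C.filter (x ⊂ ·)).card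
    rw [← pow_add, hcard]

/-- Nonempty proper subsets of x. -/
def D (x : Finset α) : Finset (Finset α) :=
  x.powerset.filter (fun y => y.Nonempty ∧ y ≠ x)

lemma D_filter (x m : Finset α) (hm : m ∈ D x) : (D x).filter (· ⊂ m) = D m := by
  have hm' := Finset.mem_filter.mp hm
  have hmx : m ⊆ x := Finset.mem_powerset.mp hm'.1
  have hmneq : m ≠ x := hm'.2.2
  ext y
  simp only [D, Finset.mem_filter, Finset.mem_powerset]
  constructor
  · rintro ⟨⟨_, hne, _⟩, hym⟩
    exact ⟨hym.subset, hne, hym.ne⟩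
  · rintro ⟨hym, hne, hneq⟩
    have hym' : y ⊂ m := ssubset_of_subset_of_ne hym hneq
    have hyx : y ⊂ x := lt_of_lt_of_le hym' hmx
    exact ⟨⟨hyx.subset, hne, hyx.ne⟩, hym'⟩

lemma sum_omega_D (x : Finset α) (hx : x.Nonempty) :
    ∑ m ∈ D x, omegaS m = 1 + (-1) ^ x.card := by
  have step : ∀ m ∈ D x, omegaS m = -(-1) ^ m.card := by
    intro m hm
    have hne : m.Nonempty := (Finset.mem_filter.mp hm).2.1
    rw [omegaS, neg_one_pow_sub_one (Finset.card_pos.mpr hne)]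
  rw [Finset.sum_congr rfl step, Finset.sum_neg_distrib]
  have hsplit : ∑ m ∈ x.powerset.filter (fun y => y.Nonempty ∧ y ≠ x), ((-1:ℤ)) ^ m.card
      + ∑ m ∈ x.powerset.filter (fun y => ¬(y.Nonempty ∧ y ≠ x)), ((-1:ℤ)) ^ m.card
      = ∑ m ∈ x.powerset, ((-1:ℤ)) ^ m.card :=
    Finset.sum_filter_add_sum_filter_not _ _ _
  have hxne : x ≠ ∅ := Finset.nonempty_iff_ne_empty.mp hx
  have hcompl : x.powerset.filter (fun y => ¬(y.Nonempty ∧ y ≠ x)) = {∅, x} := by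
    ext y
    simp only [Finset.mem_filter, Finset.mem_powerset, Finset.mem_insert, Finset.mem_singleton,
      not_and_or, Finset.not_nonempty_iff_eq_empty, not_not]
    constructor
    · rintro ⟨_, rfl | rfl⟩
      · left; rfl
      · right; rfl
    · rintro (rfl | rfl)
      · exact ⟨Finset.empty_subset _, Or.inl rfl⟩
      · exact ⟨subset_rfl, Or.inr rfl⟩
  have htot : ∑ m ∈ x.powerset, ((-1:ℤ)) ^ m.card = 0 := by
    rw [Finset.sum_powerset_neg_one_pow_card, if_neg hxne]
  have hpair : ∑ m ∈ ({∅, x} : Finset (Finset α)), ((-1:ℤ)) ^ m.card = 1 + (-1) ^ x.card := by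
    rw [Finset.sum_pair (Ne.symm hxne)]
    simp
  rw [hcompl, hpair, htot] at hsplit
  have hfin : ∑ m ∈ x.powerset.filter (fun y => y.Nonempty ∧ y ≠ x), ((-1:ℤ)) ^ m.card
      = -(1 + (-1) ^ x.card) := by linarith
  rw [D, hfin]
  ring

lemma E_D (x : Finset α) (hx : x.Nonempty) : E (D x) = omegaS x := by
  induction x using Finset.strongInduction with
  | _ x ih =>
    rw [E_eq, groupMax]
    have hsum : ∑ m ∈ D x, E ((D x).filter (· ⊂ m)) = ∑ m ∈ D x, omegaS m := by
      apply Finset.sum_congr rfl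
      intro m hm
      rw [D_filter x m hm]
      have hm' := Finset.mem_filter.mp hm
      have hmx : m ⊂ x := ssubset_of_subset_of_ne (Finset.mem_powerset.mp hm'.1) hm'.2.2
      exact ih m hmx hm'.2.1
    rw [hsum, sum_omega_D x hx, omegaS, neg_one_pow_sub_one (Finset.card_pos.mpr hx)]
    ring

lemma filter_ssub_eq_D (G : Finset (Finset α)) (hG : IsComplex G) (x : Finset α) (hx : x ∈ G) :
    G.filter (· ⊂ x) = D x := by
  ext y
  simp only [Finset.mem_filter, D, Finset.mem_powerset]
  constructor
  · rintro ⟨hyG, hyx⟩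
    exact ⟨hyx.subset, hG.1 y hyG, hyx.ne⟩
  · rintro ⟨hyx, hne, hneq⟩
    exact ⟨hG.2 x hx y hne hyx, ssubset_of_subset_of_ne hyx hneq⟩

theorem sum_omega_chi_sphere (G : Finset (Finset α)) (hG : IsComplex G) :
    ∑ x ∈ G, omegaS x * chiChains (sphere G x) = 0 := by
  have key : ∀ x ∈ G, omegaS x * chiChains (sphere G x) = omegaS x - E (G.filter (x ⊂ ·)) := by
    intro x hx
    have h1 : chiChains (sphere G x) = 1 - E (sphere G x) := by
      have := E_eq (sphere G x); linarith
    have h2 : E (sphere G x) = omegaS x * E (G.filter (x ⊂ ·)) := by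
      rw [E_sphere, filter_ssub_eq_D G hG x hx, E_D x (hG.1 x hx)]
    have hsq : omegaS x * omegaS x = 1 := by
      rw [omegaS, ← pow_add]
      exact Even.neg_one_pow ⟨x.card - 1, rfl⟩
    rw [h1, h2]
    linear_combination (- E (G.filter (x ⊂ ·))) * hsq
  rw [Finset.sum_congr rfl key, Finset.sum_sub_distrib]
  have hmin : ∑ x ∈ G, E (G.filter (x ⊂ ·)) = chiChains G := (groupMin G).symm
  have hmax : chiChains G = ∑ x ∈ G, omegaS x := by
    rw [groupMax]
    apply Finset.sum_congr rfl
    intro m hm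
    rw [filter_ssub_eq_D G hG m hm, E_D m (hG.1 m hm)]
  rw [hmin, hmax]
  ring
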